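/- If M is an R-module that is not simple and m ∈ J(M) (the Jacobson radical of M), then for every coprime coset n + N ∈ B_M (N nonzero, N + Rn = M) containing m, necessarily N = M; i.e., the only basic open neighborhood of m in the Golomb topology is M itself, provided M is finitely generated. -/
import Mathlib

open Pointwise

/-- If `M` is finitely generated and not simple, and `m` lies in the Jacobson
radical of `M`, then the only coprime coset containing `m` is `M` itself. -/
theorem jacobson_mem_only_basic_nbhd_top
    {R M : Type*} [CommRing R] [AddCommGroup M] [Module R M] [Nontrivial M]
    [Module.Finite R M] (hns : ¬ IsSimpleModule R M)
    (m : M) (hm : m ∈ sInf {P : Submodule R M | IsCoatom P})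
    (n : M) (N : Submodule R M) (hN : N ≠ ⊥)
    (hcop : N ⊔ Submodule.span R {n} = ⊤)
    (hmem : m ∈ n +ᵥ (N : Set M)) : N = ⊤ := by
  obtain ⟨x, hx, rfl⟩ := hmem
  -- m = n + x with x ∈ N
  have hco : IsCoatomic (Submodule R M) :=
    CompleteLattice.coatomic_of_top_compact
      ((Submodule.fg_iff_compact _).mp Module.Finite.fg_top)
  have hsup : N ⊔ Submodule.span R {n + x} = ⊤ := by
    rw [eq_top_iff, ← hcop]
    apply sup_le le_sup_left
    rw [Submodule.span_le, Set.singleton_subset_iff]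
    have h1 : n + x ∈ N ⊔ Submodule.span R {n + x} :=
      Submodule.mem_sup_right (Submodule.mem_span_singleton_self _)
    have h2 : x ∈ N ⊔ Submodule.span R {n + x} := Submodule.mem_sup_left hx
    have h3 := Submodule.sub_mem _ h1 h2
    rwa [add_sub_cancel_right] at h3
  rcases hco.eq_top_or_exists_le_coatom N with h | ⟨P, hP, hNP⟩
  · exact h
  · exfalso
    have hmP : n + x ∈ P := Submodule.mem_sInf.mp hm P hP
    have : (⊤ : Submodule R M) ≤ P := by
      rw [← hsup]
      exact sup_le hNP (by rwa [Submodule.span_le, Set.singleton_subset_iff])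
    exact hP.1 (top_le_iff.mp this)
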